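/- Let ε ∈ (0,1], assume max_{j∈J} p_j > 0 (so C > 0), and let β be a partition of J into M (possibly empty) bags such that every bag has size p(B) ≤ 4C. Then ∑_{m=1}^M q_m · Opt_max(M̂, m) ≤ (1+5ε) · ∑_{m=1}^M q_m · Opt_max(β, m). -/

import Mathlib

open scoped BigOperators

attribute [local instance] Classical.propDecidable

/-- The load of machine `i` under the assignment `σ` of items (with sizes `sz`) to `m` machines. -/
noncomputable def load {ι : Type*} [Fintype ι] {m : ℕ} (sz : ι → ℝ) (σ : ι → Fin m)
    (i : Fin m) : ℝ :=
  ∑ b : ι, if σ b = i then sz b else 0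

/-- The optimal makespan (minimum over all assignments of the maximum machine load)
for items with sizes `sz` on `m` identical machines. -/
noncomputable def optMax {ι : Type*} [Fintype ι] (sz : ι → ℝ) (m : ℕ) : ℝ :=
  ⨅ σ : ι → Fin m, ⨆ i : Fin m, load sz σ i

/-- The size of bag `b` for the partition `β` of the jobs into bags. -/
noncomputable def bagSize {n : ℕ} {ι : Type*} (p : Fin n → ℝ) (β : Fin n → ι) (b : ι) : ℝ :=
  ∑ j : Fin n, if β j = b then p j else 0

/-- The quantity `C = ∑_{m=1}^M q_m · max (max_j p_j) ((∑_j p_j)/m)`,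
where scenario `i : Fin M` corresponds to `m = i+1` machines. -/
noncomputable def Cval {n M : ℕ} (p : Fin n → ℝ) (q : Fin M → ℝ) : ℝ :=
  ∑ i : Fin M, q i * max (⨆ j : Fin n, p j) ((∑ j : Fin n, p j) / ((i.1 + 1 : ℕ) : ℝ))

/-- A bag `b` of `β` is regular if its size is at least `εC` or it packs a job of size
at least `ε²C`. -/
def Regular {n M : ℕ} (ε C : ℝ) (p : Fin n → ℝ) (β : Fin n → Fin M) (b : Fin M) : Prop :=
  ε * C ≤ bagSize p β b ∨ ∃ j, β j = b ∧ ε ^ 2 * C ≤ p j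

/-- `L = {⌊log_{1+ε}(ε²C)⌋, …, ⌈log_{1+ε}(4C)⌉}`. -/
noncomputable def Lset (ε C : ℝ) : Finset ℤ :=
  Finset.Icc ⌊Real.log (ε ^ 2 * C) / Real.log (1 + ε)⌋ ⌈Real.log (4 * C) / Real.log (1 + ε)⌉

/-- `M̂_ℓ`: the number of regular bags of `β` with size in `[(1+ε)^ℓ, (1+ε)^{ℓ+1})`. -/
noncomputable def Mhat {n M : ℕ} (ε C : ℝ) (p : Fin n → ℝ) (β : Fin n → Fin M) (ℓ : ℤ) : ℕ :=
  (Finset.univ.filter (fun b : Fin M =>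
    Regular ε C p β b ∧ (1 + ε) ^ ℓ ≤ bagSize p β b ∧ bagSize p β b < (1 + ε) ^ (ℓ + 1))).card

/-- `M̂_sand = ⌈(total size of non-regular bags)/(εC)⌉`. -/
noncomputable def Msand {n M : ℕ} (ε C : ℝ) (p : Fin n → ℝ) (β : Fin n → Fin M) : ℕ :=
  ⌈(∑ b : Fin M, if ¬ Regular ε C p β b then bagSize p β b else 0) / (ε * C)⌉₊

/-- Index type for the collection of items consisting of `M̂_ℓ` items for each `ℓ ∈ L`
together with `M̂_sand` sand items. -/
def BagIdx {n M : ℕ} (ε C : ℝ) (p : Fin n → ℝ) (β : Fin n → Fin M) : Type :=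
  (Σ ℓ : (Lset ε C), Fin (Mhat ε C p β ℓ.1)) ⊕ Fin (Msand ε C p β)

noncomputable instance {n M : ℕ} (ε C : ℝ) (p : Fin n → ℝ) (β : Fin n → Fin M) :
    Fintype (BagIdx ε C p β) := by
  unfold BagIdx; infer_instance

/-- The sizes of the items of the guess `M̂`: each of the `M̂_ℓ` items has size `(1+ε)^{ℓ+1}`
and each of the `M̂_sand` items has size `(1+ε)·εC`. -/
noncomputable def itemSz {n M : ℕ} (ε C : ℝ) (p : Fin n → ℝ) (β : Fin n → Fin M) :
    BagIdx ε C p β → ℝ :=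
  Sum.elim (fun x => (1 + ε) ^ ((x.1.1 : ℤ) + 1)) (fun _ => (1 + ε) * ε * C)

section AuxLemmas

variable {ι : Type*} [Fintype ι]

lemma load_nonneg' {m : ℕ} {sz : ι → ℝ} (h : ∀ b, 0 ≤ sz b) (σ : ι → Fin m) (i : Fin m) :
    0 ≤ load sz σ i :=
  Finset.sum_nonneg fun b _ => by split <;> simp [h b]

lemma sum_load' {m : ℕ} (sz : ι → ℝ) (σ : ι → Fin m) :
    ∑ i : Fin m, load sz σ i = ∑ b : ι, sz b := by
  unfold load
  rw [Finset.sum_comm]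
  simp

lemma load_le_csSup {m : ℕ} (sz : ι → ℝ) (σ : ι → Fin m) (i : Fin m) :
    load sz σ i ≤ ⨆ i', load sz σ i' :=
  le_ciSup (Set.Finite.bddAbove (Set.finite_range _)) i

lemma optMax_le' {m : ℕ} (sz : ι → ℝ) (σ : ι → Fin m) :
    optMax sz m ≤ ⨆ i, load sz σ i :=
  ciInf_le (Set.Finite.bddBelow (Set.finite_range _)) σ

lemma bagSize_nonneg' {n : ℕ} {κ : Type*} {p : Fin n → ℝ} (hp : ∀ j, 0 ≤ p j)
    (β : Fin n → κ) (b : κ) : 0 ≤ bagSize p β b :=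
  Finset.sum_nonneg fun j _ => by split <;> simp [hp j]

end AuxLemmas

lemma key_lemma {n M : ℕ} {ε C : ℝ} (hε0 : 0 < ε) (hC : 0 < C)
    {p : Fin n → ℝ} (hp : ∀ j, 0 ≤ p j) (β : Fin n → Fin M)
    {m : ℕ} (hm : 0 < m) (σ : Fin M → Fin m) :
    optMax (itemSz ε C p β) m ≤
      (1 + ε) * (⨆ i, load (bagSize p β) σ i) + (1 + ε) * (ε * C) := by
  have hεC : 0 < ε * C := mul_pos hε0 hC
  have h1ε : (0:ℝ) < 1 + ε := by linarith
  haveI : NeZero m := ⟨hm.ne'⟩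
  -- sand and regular parts of the bag sizes
  set szS : Fin M → ℝ := fun b => if ¬ Regular ε C p β b then bagSize p β b else 0 with hszS
  set szR : Fin M → ℝ := fun b => if Regular ε C p β b then bagSize p β b else 0 with hszR
  have hszS_nonneg : ∀ b, 0 ≤ szS b := fun b => by
    simp only [hszS]; split <;> simp [bagSize_nonneg' hp]
  have hszR_nonneg : ∀ b, 0 ≤ szR b := fun b => by
    simp only [hszR]; split <;> simp [bagSize_nonneg' hp]
  have hszadd : ∀ b, szR b + szS b = bagSize p β b := fun b => by
    simp only [hszS, hszR]; by_cases h : Regular ε C p β b <;> simp [h]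
  have hsand_nonneg : ∀ i, 0 ≤ load szS σ i := load_nonneg' hszS_nonneg σ
  set k : Fin m → ℕ := fun i => ⌈(load szS σ i) / (ε*C)⌉₊ with hk
  -- enough sand items
  have hMsand : Msand ε C p β ≤ ∑ i : Fin m, k i := by
    have hS : (∑ b : Fin M, if ¬ Regular ε C p β b then bagSize p β b else 0)
        = ∑ i : Fin m, load szS σ i := (sum_load' szS σ).symm
    unfold Msand
    rw [hS]
    apply Nat.ceil_le.mpr
    rw [Finset.sum_div]
    push_cast
    apply Finset.sum_le_sum
    intro i _
    exact Nat.le_ceil _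
  obtain ⟨e⟩ : Nonempty (Fin (Msand ε C p β) ↪ Σ i : Fin m, Fin (k i)) := by
    apply Function.Embedding.nonempty_of_card_le
    simpa using hMsand
  -- the finsets of regular bags in each size class
  set S : ℤ → Finset (Fin M) := fun ℓ => Finset.univ.filter (fun b : Fin M =>
    Regular ε C p β b ∧ (1 + ε) ^ ℓ ≤ bagSize p β b ∧ bagSize p β b < (1 + ε) ^ (ℓ + 1))
    with hSdef
  have hScard : ∀ ℓ : ℤ, Mhat ε C p β ℓ = (S ℓ).card := fun ℓ => rfl
  set bg : ∀ ℓ : ℤ, Fin (Mhat ε C p β ℓ) → Fin M :=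
    fun ℓ r => ((S ℓ).equivFin.symm (Fin.cast (hScard ℓ) r) : Fin M) with hbg
  have hbgmem : ∀ (ℓ : ℤ) (r : Fin (Mhat ε C p β ℓ)), bg ℓ r ∈ S ℓ := fun ℓ r =>
    ((S ℓ).equivFin.symm (Fin.cast (hScard ℓ) r)).2
  -- the assignment of items to machines
  set τ : BagIdx ε C p β → Fin m :=
    Sum.elim (fun x => σ (bg x.1.1 x.2)) (fun t => (e t).1) with hτ
  -- rewriting sums over BagIdx
  have hsum : ∀ f : BagIdx ε C p β → ℝ, ∑ x : BagIdx ε C p β, f x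
      = (∑ x : (Σ ℓ : (Lset ε C), Fin (Mhat ε C p β ℓ.1)), f (Sum.inl x))
        + ∑ t : Fin (Msand ε C p β), f (Sum.inr t) := by
    intro f
    have h0 : ∑ x : BagIdx ε C p β, f x
        = ∑ x : (Σ ℓ : (Lset ε C), Fin (Mhat ε C p β ℓ.1)) ⊕ Fin (Msand ε C p β), f x :=
      Fintype.sum_equiv ⟨fun x => x, fun x => x, fun _ => rfl, fun _ => rfl⟩ f f (fun _ => rfl)
    rw [h0]; exact Fintype.sum_sum_type _
  -- the per-machine load bound
  have hloadbound : ∀ i : Fin m, load (itemSz ε C p β) τ i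
      ≤ (1 + ε) * load (bagSize p β) σ i + (1 + ε) * (ε * C) := by
    intro i
    have hload : load (itemSz ε C p β) τ i
        = (∑ x : (Σ ℓ : (Lset ε C), Fin (Mhat ε C p β ℓ.1)),
            if σ (bg x.1.1 x.2) = i then (1 + ε) ^ ((x.1.1 : ℤ) + 1) else 0)
          + ∑ t : Fin (Msand ε C p β), if (e t).1 = i then (1+ε) * ε * C else 0 := by
      unfold load
      rw [hsum]
      rfl
    -- regular part
    have hA : (∑ x : (Σ ℓ : (Lset ε C), Fin (Mhat ε C p β ℓ.1)),
            if σ (bg x.1.1 x.2) = i then (1 + ε) ^ ((x.1.1 : ℤ) + 1) else 0)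
        ≤ (1 + ε) * load szR σ i := by
      rw [← Finset.univ_sigma_univ, Finset.sum_sigma]
      have hstep : ∀ ℓ : (Lset ε C), (∑ r : Fin (Mhat ε C p β ℓ.1),
          if σ (bg ℓ.1 r) = i then (1 + ε) ^ ((ℓ.1 : ℤ) + 1) else 0)
          ≤ ∑ b ∈ S ℓ.1, if σ b = i then (1 + ε) * szR b else 0 := by
        intro ℓ
        have hconv : (∑ r : Fin (Mhat ε C p β ℓ.1),
            if σ (bg ℓ.1 r) = i then (1 + ε) ^ ((ℓ.1 : ℤ) + 1) else 0)
            = ∑ b ∈ S ℓ.1, if σ b = i then (1 + ε) ^ ((ℓ.1 : ℤ) + 1) else 0 := by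
          rw [← Finset.sum_coe_sort (S ℓ.1)]
          exact Fintype.sum_equiv ((finCongr (hScard ℓ.1)).trans (S ℓ.1).equivFin.symm)
            _ _ (fun r => rfl)
        rw [hconv]
        apply Finset.sum_le_sum
        intro b hb
        rw [hSdef] at hb
        simp only [Finset.mem_filter] at hb
        obtain ⟨-, hreg, hlb, -⟩ := hb
        have h1 : (1 + ε) ^ ((ℓ.1 : ℤ) + 1) = (1 + ε) ^ (ℓ.1 : ℤ) * (1 + ε) :=
          zpow_add_one₀ h1ε.ne' _
        have h2 : (1 + ε) ^ ((ℓ.1 : ℤ) + 1) ≤ (1 + ε) * szR b := by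
          rw [h1, hszR]
          simp only [hreg, if_true]
          nlinarith [bagSize_nonneg' hp β b]
        split
        · exact h2
        · exact le_rfl
      calc (∑ ℓ : (Lset ε C), ∑ r : Fin (Mhat ε C p β ℓ.1),
            if σ (bg ℓ.1 r) = i then (1 + ε) ^ ((ℓ.1 : ℤ) + 1) else 0)
          ≤ ∑ ℓ : (Lset ε C), ∑ b ∈ S ℓ.1, if σ b = i then (1 + ε) * szR b else 0 :=
            Finset.sum_le_sum fun ℓ _ => hstep ℓ
        _ = ∑ ℓ ∈ Lset ε C, ∑ b ∈ S ℓ, if σ b = i then (1 + ε) * szR b else 0 := by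
            rw [← Finset.sum_coe_sort (Lset ε C)]
        _ = ∑ b ∈ (Lset ε C).biUnion S, if σ b = i then (1 + ε) * szR b else 0 := by
            rw [Finset.sum_biUnion]
            intro ℓ₁ h₁ ℓ₂ h₂ hne
            simp only [Finset.disjoint_left]
            intro b hb₁ hb₂
            rw [hSdef] at hb₁ hb₂
            simp only [Finset.mem_filter] at hb₁ hb₂
            obtain ⟨-, -, hl₁, hu₁⟩ := hb₁
            obtain ⟨-, -, hl₂, hu₂⟩ := hb₂
            rcases lt_trichotomy ℓ₁ ℓ₂ with h | h | h
            · have : (1+ε) ^ (ℓ₁+1) ≤ (1+ε) ^ ℓ₂ :=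
                zpow_le_zpow_right₀ (by linarith) (by omega)
              linarith
            · exact hne h
            · have : (1+ε) ^ (ℓ₂+1) ≤ (1+ε) ^ ℓ₁ :=
                zpow_le_zpow_right₀ (by linarith) (by omega)
              linarith
        _ ≤ ∑ b : Fin M, if σ b = i then (1 + ε) * szR b else 0 := by
            apply Finset.sum_le_sum_of_subset_of_nonneg (Finset.subset_univ _)
            intro b _ _
            split
            · have := hszR_nonneg b
              positivity
            · exact le_rfl
        _ = (1 + ε) * load szR σ i := by
            unfold load
            rw [Finset.mul_sum]
            apply Finset.sum_congr rfl
            intro b _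
            split <;> simp
      -- sand part
    have hB : (∑ t : Fin (Msand ε C p β), if (e t).1 = i then (1+ε) * ε * C else 0)
        ≤ (k i : ℝ) * ((1+ε) * ε * C) := by
      have h1 : (∑ t : Fin (Msand ε C p β), if (e t).1 = i then (1+ε) * ε * C else 0)
          = ∑ a ∈ Finset.univ.map e, if a.1 = i then (1+ε) * ε * C else 0 := by
        rw [Finset.sum_map]
      rw [h1]
      calc (∑ a ∈ Finset.univ.map e, if a.1 = i then (1+ε) * ε * C else 0)
          ≤ ∑ a : (Σ j : Fin m, Fin (k j)), if a.1 = i then (1+ε) * ε * C else 0 := by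
            apply Finset.sum_le_sum_of_subset_of_nonneg (Finset.subset_univ _)
            intro a _ _
            split
            · positivity
            · exact le_rfl
        _ = (k i : ℝ) * ((1+ε) * ε * C) := by
            rw [← Finset.univ_sigma_univ, Finset.sum_sigma]
            rw [Finset.sum_eq_single i]
            · simp [mul_comm]
            · intro j _ hj
              simp [hj]
            · simp
    have hki : (k i : ℝ) * (ε * C) ≤ load szS σ i + ε * C := by
      have := Nat.ceil_lt_add_one (div_nonneg (hsand_nonneg i) hεC.le)
      have h2 : (k i : ℝ) < load szS σ i / (ε*C) + 1 := this
      have h3 : load szS σ i / (ε*C) * (ε*C) = load szS σ i := div_mul_cancel₀ _ hεC.ne'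
      nlinarith
    have hkC : (k i : ℝ) * ((1+ε) * ε * C) ≤ (1+ε) * (load szS σ i + ε * C) := by
      have hkn : (0:ℝ) ≤ (k i : ℝ) := Nat.cast_nonneg _
      calc (k i : ℝ) * ((1+ε) * ε * C) = (1+ε) * ((k i : ℝ) * (ε * C)) := by ring
        _ ≤ (1+ε) * (load szS σ i + ε * C) := by
            apply mul_le_mul_of_nonneg_left hki h1ε.le
    have hloadsplit : load szR σ i + load szS σ i = load (bagSize p β) σ i := by
      unfold load
      rw [← Finset.sum_add_distrib]
      apply Finset.sum_congr rfl
      intro b _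
      split <;> simp [hszadd b]
    rw [hload]
    calc _ ≤ (1 + ε) * load szR σ i + (k i : ℝ) * ((1+ε) * ε * C) := add_le_add hA hB
      _ ≤ (1 + ε) * load szR σ i + (1+ε) * (load szS σ i + ε * C) := by linarith
      _ = (1 + ε) * load (bagSize p β) σ i + (1 + ε) * (ε * C) := by
          rw [← hloadsplit]; ring
  -- conclude
  calc optMax (itemSz ε C p β) m ≤ ⨆ i, load (itemSz ε C p β) τ i := optMax_le' _ τ
    _ ≤ (1 + ε) * (⨆ i, load (bagSize p β) σ i) + (1 + ε) * (ε * C) := by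
        apply ciSup_le
        intro i
        refine (hloadbound i).trans ?_
        have := load_le_csSup (bagSize p β) σ i
        nlinarith

/-- the expected makespan of the guess `M̂` is at most `(1+5ε)` times the
expected makespan of `β`: `∑_{m=1}^M q_m·Opt_max(M̂,m) ≤ (1+5ε)·∑_{m=1}^M q_m·Opt_max(β,m)`. -/
theorem stmt4 (n M : ℕ) (hM : 1 ≤ M) (ε : ℝ) (hε0 : 0 < ε) (hε1 : ε ≤ 1)
    (p : Fin n → ℝ) (hp : ∀ j, 0 ≤ p j) (hpmax : 0 < ⨆ j : Fin n, p j)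
    (q : Fin M → ℝ) (hq : ∀ i, 0 ≤ q i) (hq1 : ∑ i, q i = 1)
    (β : Fin n → Fin M) (hβ : ∀ b, bagSize p β b ≤ 4 * Cval p q) :
    ∑ i : Fin M, q i * optMax (itemSz ε (Cval p q) p β) (i.1 + 1) ≤
      (1 + 5 * ε) * ∑ i : Fin M, q i * optMax (bagSize p β) (i.1 + 1) := by
  have hn : Nonempty (Fin n) := by
    by_contra h
    rw [not_nonempty_iff] at h
    rw [Real.iSup_of_isEmpty] at hpmax
    exact lt_irrefl _ hpmax
  set C := Cval p q with hCdef
  have hqmax : (⨆ j : Fin n, p j) ≤ C := by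
    rw [hCdef]
    unfold Cval
    calc (⨆ j : Fin n, p j) = ∑ i : Fin M, q i * (⨆ j : Fin n, p j) := by
          rw [← Finset.sum_mul, hq1, one_mul]
      _ ≤ _ := Finset.sum_le_sum fun i _ =>
          mul_le_mul_of_nonneg_left (le_max_left _ _) (hq i)
  have hC : 0 < C := lt_of_lt_of_le hpmax hqmax
  -- lower bound for optMax of the bags
  have hlow : ∀ i : Fin M,
      max (⨆ j : Fin n, p j) ((∑ j : Fin n, p j) / ((i.1 + 1 : ℕ) : ℝ))
        ≤ optMax (bagSize p β) (i.1 + 1) := by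
    intro i
    apply le_ciInf
    intro σ
    apply max_le
    · apply ciSup_le
      intro j
      have h1 : p j ≤ bagSize p β (β j) := by
        unfold bagSize
        have h0 := Finset.single_le_sum
          (f := fun j' => @ite ℝ (β j' = β j) (Classical.propDecidable _) (p j') 0)
          (fun j' _ => by split <;> simp [hp j']) (Finset.mem_univ j)
        beta_reduce at h0
        rwa [if_pos rfl] at h0
      have h2 : bagSize p β (β j) ≤ load (bagSize p β) σ (σ (β j)) := by
        unfold load
        have h0 := Finset.single_le_sum
          (f := fun b => if σ b = σ (β j) then bagSize p β b else 0)
          (fun b _ => by split <;> simp [bagSize_nonneg' hp]) (Finset.mem_univ (β j))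
        beta_reduce at h0
        rwa [if_pos rfl] at h0
      exact h1.trans (h2.trans (load_le_csSup _ _ _))
    · have hmpos : (0:ℝ) < ((i.1 + 1 : ℕ) : ℝ) := by positivity
      rw [div_le_iff₀ hmpos]
      have h1 : ∑ j : Fin n, p j = ∑ i' : Fin (i.1+1), load (bagSize p β) σ i' := by
        rw [sum_load']
        unfold bagSize
        rw [Finset.sum_comm]
        apply Finset.sum_congr rfl
        intro j _
        exact ((Finset.sum_eq_single (β j)
          (fun b _ hb => if_neg (fun h => hb h.symm))
          (fun h => absurd (Finset.mem_univ _) h)).trans (if_pos rfl)).symm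
      rw [h1]
      calc ∑ i' : Fin (i.1+1), load (bagSize p β) σ i'
          ≤ ∑ _i' : Fin (i.1+1), ⨆ i'', load (bagSize p β) σ i'' :=
            Finset.sum_le_sum fun i' _ => load_le_csSup _ _ _
        _ = (⨆ i'', load (bagSize p β) σ i'') * ((i.1 + 1 : ℕ) : ℝ) := by
            rw [Finset.sum_const]
            simp [mul_comm]
  have hOptNonneg : ∀ i : Fin M, 0 ≤ optMax (bagSize p β) (i.1 + 1) := fun i =>
    le_trans (le_trans hpmax.le (le_max_left _ _)) (hlow i)
  have hCle : C ≤ ∑ i : Fin M, q i * optMax (bagSize p β) (i.1 + 1) := by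
    rw [hCdef]
    unfold Cval
    exact Finset.sum_le_sum fun i _ => mul_le_mul_of_nonneg_left (hlow i) (hq i)
  -- main per-scenario bound
  have hmain : ∀ i : Fin M, optMax (itemSz ε C p β) (i.1 + 1)
      ≤ (1 + ε) * optMax (bagSize p β) (i.1 + 1) + (1 + ε) * (ε * C) := by
    intro i
    obtain ⟨σ0, hσ0⟩ := Finite.exists_min
      (fun σ : Fin M → Fin (i.1+1) => ⨆ j, load (bagSize p β) σ j)
    have heq : optMax (bagSize p β) (i.1+1) = ⨆ j, load (bagSize p β) σ0 j :=
      le_antisymm (ciInf_le (Set.Finite.bddBelow (Set.finite_range _)) σ0) (le_ciInf hσ0)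
    rw [heq]
    exact key_lemma hε0 hC hp β (Nat.succ_pos _) σ0
  have hX : C ≤ ∑ i : Fin M, q i * optMax (bagSize p β) (i.1 + 1) := hCle
  calc ∑ i : Fin M, q i * optMax (itemSz ε C p β) (i.1 + 1)
      ≤ ∑ i : Fin M, q i * ((1 + ε) * optMax (bagSize p β) (i.1 + 1) + (1 + ε) * (ε * C)) :=
        Finset.sum_le_sum fun i _ => mul_le_mul_of_nonneg_left (hmain i) (hq i)
    _ = (1 + ε) * (∑ i : Fin M, q i * optMax (bagSize p β) (i.1 + 1)) + (1 + ε) * (ε * C) := by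
        rw [Finset.sum_congr rfl (fun i _ => mul_add (q i) _ _), Finset.sum_add_distrib]
        rw [← Finset.sum_mul, hq1, one_mul]
        rw [Finset.mul_sum]
        congr 1
        apply Finset.sum_congr rfl
        intro i _
        ring
    _ ≤ (1 + 5 * ε) * ∑ i : Fin M, q i * optMax (bagSize p β) (i.1 + 1) := by
        have h1 : ε * C ≤ ε * ∑ i : Fin M, q i * optMax (bagSize p β) (i.1 + 1) :=
          mul_le_mul_of_nonneg_left hX hε0.le
        nlinarith [mul_pos hε0 hC, h1]
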